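/- Let 𝔗 = (V, E, v_I, λ) be a transition system with finite V and labelling λ : V → α, and let w, w′ : ℕ → α be infinite words. Suppose there are strictly monotone functions c, c′ : ℕ → ℕ with c 0 = 0 and c′ 0 = 0 such that for every n, writing u_n for the finite word w(c n) ⋯ w(c (n+1) − 1) and u′_n for w′(c′ n) ⋯ w′(c′ (n+1) − 1), the blocks induce the same path transformations: for all vertices x, y ∈ V, x →^{u_n} y if and only if x →^{u′_n} y. Then w ∈ Tr(𝔗) if and only if w′ ∈ Tr(𝔗). -/
import Mathlib


/-- `x →^{u} y`: the transition system with edge relation `E` and labelling `lab` has a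
path from `x` to `y` labelled by the finite word `u`. -/
def TSReaches {V α : Type*} (E : V → V → Prop) (lab : V → α)
    (x : V) (u : List α) (y : V) : Prop :=
  ∃ ρ : ℕ → V, ρ 0 = x ∧ ρ u.length = y ∧
    ∀ j (hj : j < u.length), E (ρ j) (ρ (j + 1)) ∧ lab (ρ j) = u.get ⟨j, hj⟩

/-- The `n`-th block `w(c n) w(c n + 1) ⋯ w(c (n+1) − 1)` of the infinite word `w`
with respect to the factorization `c`. -/
def wordBlock {A : Type*} (w : ℕ → A) (c : ℕ → ℕ) (n : ℕ) : List A :=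
  (List.range (c (n + 1) - c n)).map (fun j => w (c n + j))

lemma wordBlock_length {A : Type*} (w : ℕ → A) (c : ℕ → ℕ) (n : ℕ) :
    (wordBlock w c n).length = c (n + 1) - c n := by simp [wordBlock]

lemma wordBlock_get {A : Type*} (w : ℕ → A) (c : ℕ → ℕ) (n j : ℕ)
    (hj : j < (wordBlock w c n).length) :
    (wordBlock w c n).get ⟨j, hj⟩ = w (c n + j) := by
  simp [wordBlock]

lemma key_dir {V α : Type*} (E : V → V → Prop) (vI : V) (lab : V → α)
    (w w' : ℕ → α) (c c' : ℕ → ℕ)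
    (hc : StrictMono c) (hc' : StrictMono c') (hc0 : c 0 = 0) (hc0' : c' 0 = 0)
    (hb : ∀ n x y, TSReaches E lab x (wordBlock w c n) y →
      TSReaches E lab x (wordBlock w' c' n) y) :
    (∃ ρ : ℕ → V, ρ 0 = vI ∧ (∀ n, E (ρ n) (ρ (n + 1))) ∧ w = lab ∘ ρ) →
    (∃ ρ : ℕ → V, ρ 0 = vI ∧ (∀ n, E (ρ n) (ρ (n + 1))) ∧ w' = lab ∘ ρ) := by
  rintro ⟨ρ, h0, hE, hw⟩
  have hreach : ∀ n, TSReaches E lab (ρ (c n)) (wordBlock w' c' n) (ρ (c (n + 1))) := by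
    intro n
    apply hb
    refine ⟨fun j => ρ (c n + j), rfl, ?_, ?_⟩
    · show ρ (c n + (wordBlock w c n).length) = ρ (c (n + 1))
      rw [wordBlock_length]
      have := hc.monotone (show n ≤ n + 1 by omega)
      congr 1
      omega
    · intro j hj
      refine ⟨hE _, ?_⟩
      rw [wordBlock_get, hw]; rfl
  have hreach' : ∀ n, ∃ σ : ℕ → V, σ 0 = ρ (c n) ∧ σ (c' (n + 1) - c' n) = ρ (c (n + 1)) ∧
      ∀ j, j < c' (n + 1) - c' n → E (σ j) (σ (j + 1)) ∧ lab (σ j) = w' (c' n + j) := by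
    intro n
    obtain ⟨σ, hσ0, hσl, hσ⟩ := hreach n
    refine ⟨σ, hσ0, ?_, fun j hj => ?_⟩
    · rwa [wordBlock_length] at hσl
    · have hj' : j < (wordBlock w' c' n).length := by rwa [wordBlock_length]
      obtain ⟨he, hl⟩ := hσ j hj'
      exact ⟨he, by rwa [wordBlock_get] at hl⟩
  choose σ hσ0 hσlen hσE using hreach'
  set g : ℕ → ℕ := fun m => Nat.findGreatest (fun n => c' n ≤ m) m with hgdef
  have hg1 : ∀ m, c' (g m) ≤ m := fun m =>
    Nat.findGreatest_spec (P := fun n => c' n ≤ m) (Nat.zero_le m) (by simp [hc0'])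
  have hg2 : ∀ m, m < c' (g m + 1) := by
    intro m
    by_cases h : g m + 1 ≤ m
    · have h2 := Nat.findGreatest_is_greatest (Nat.lt_succ_self (g m)) h
      exact lt_of_not_ge h2
    · have h2 : m < g m + 1 := by omega
      exact h2.trans_le hc'.le_apply
  have hguniq : ∀ m n, c' n ≤ m → m < c' (n + 1) → g m = n := by
    intro m n h1 h2
    rcases lt_trichotomy (g m) n with h | h | h
    · have h3 := hc'.monotone (show g m + 1 ≤ n by omega)
      have := hg2 m; omega
    · exact h
    · have h3 := hc'.monotone (show n + 1 ≤ g m by omega)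
      have := hg1 m; omega
  have hg0 : g 0 = 0 := Nat.le_zero.mp (Nat.findGreatest_le 0)
  refine ⟨fun m => σ (g m) (m - c' (g m)), ?_, ?_, ?_⟩
  · show σ (g 0) (0 - c' (g 0)) = vI
    rw [hg0, hc0', hσ0, hc0, h0]
  · intro m
    have h1 := hg1 m
    have h2 := hg2 m
    have hedge := (hσE (g m) (m - c' (g m)) (by omega)).1
    show E (σ (g m) (m - c' (g m))) (σ (g (m + 1)) (m + 1 - c' (g (m + 1))))
    by_cases hcase : m + 1 < c' (g m + 1)
    · have hgm1 : g (m + 1) = g m := hguniq _ _ (by omega) hcase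
      rw [hgm1]
      have heq : m + 1 - c' (g m) = (m - c' (g m)) + 1 := by omega
      rw [heq]
      exact hedge
    · have hm1 : m + 1 = c' (g m + 1) := by omega
      have hgm1 : g (m + 1) = g m + 1 := by
        refine hguniq _ _ (by omega) ?_
        have := hc' (show g m + 1 < g m + 1 + 1 by omega)
        omega
      rw [hgm1]
      have heq : m + 1 - c' (g m + 1) = 0 := by omega
      rw [heq, hσ0]
      have heq2 : c (g m + 1) = c ((g m) + 1) := rfl
      rw [← hσlen (g m)]
      have heq3 : c' (g m + 1) - c' (g m) = (m - c' (g m)) + 1 := by omega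
      rw [heq3]
      exact hedge
  · funext m
    have h1 := hg1 m
    have h2 := hg2 m
    have hl := (hσE (g m) (m - c' (g m)) (by omega)).2
    have : c' (g m) + (m - c' (g m)) = m := by omega
    rw [this] at hl
    show w' m = lab (σ (g m) (m - c' (g m)))
    exact hl.symm

/-- If the infinite words `w` and `w′` admit factorizations into blocks
(via strictly monotone `c, c′` with `c 0 = c′ 0 = 0`) such that corresponding blocks
induce the same path transformations in the transition system `𝔗 = (V, E, v_I, λ)`
(with `V` finite), then `w ∈ Tr(𝔗)` iff `w′ ∈ Tr(𝔗)`. -/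
theorem trace_mem_of_blockwise_equiv {V α : Type*} [Finite V]
    (E : V → V → Prop) (vI : V) (lab : V → α)
    (w w' : ℕ → α) (c c' : ℕ → ℕ)
    (hc : StrictMono c) (hc' : StrictMono c') (hc0 : c 0 = 0) (hc0' : c' 0 = 0)
    (hblocks : ∀ n : ℕ, ∀ x y : V,
      TSReaches E lab x (wordBlock w c n) y ↔ TSReaches E lab x (wordBlock w' c' n) y) :
    (∃ ρ : ℕ → V, ρ 0 = vI ∧ (∀ n, E (ρ n) (ρ (n + 1))) ∧ w = lab ∘ ρ) ↔
    (∃ ρ : ℕ → V, ρ 0 = vI ∧ (∀ n, E (ρ n) (ρ (n + 1))) ∧ w' = lab ∘ ρ) := by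
  constructor
  · exact key_dir E vI lab w w' c c' hc hc' hc0 hc0' (fun n x y => (hblocks n x y).mp)
  · exact key_dir E vI lab w' w c' c hc' hc hc0' hc0 (fun n x y => (hblocks n x y).mpr)
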